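/- (Theorem) The thermal global quantum discord satisfies D_th(A₁:⋯:Aₙ) ≥ Σ_{i=1}^n min_{Φ_{A₁⋯A_{i−1}}} D_th(Φ_{A₁⋯A_{i−1}}(ρ)|A_i), where D_th(A₁:⋯:Aₙ) = min_Φ [S(Φ_{A₁⋯Aₙ}(ρ)) − S(ρ)] and each D_th(σ|A_i) is the asymmetric thermal discord minimized over local measurements on A_i, with the i-th term also minimized over the preceding non-selective local measurements on A₁,…,A_{i−1}. -/

import Mathlib

open Matrix BigOperators

/-- Von Neumann entropy in base 2, via eigenvalues of a Hermitian matrix. -/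
noncomputable def Sent {d : Type*} [Fintype d] [DecidableEq d] (ρ : Matrix d d ℂ) : ℝ :=
  if h : ρ.IsHermitian then ∑ i, Real.negMulLog (h.eigenvalues i) / Real.log 2 else 0

/-- Rank-one projector |v⟩⟨v| (for a unit vector v). -/
def proj {d : Type*} (v : d → ℂ) : Matrix d d ℂ := Matrix.vecMulVec v (star v)

/-- `e` is an orthonormal basis (a complete family of rank-one orthogonal projectors). -/
def ONB {d : Type*} [Fintype d] [DecidableEq d] (e : d → d → ℂ) : Prop :=
  ∀ k l, star (e k) ⬝ᵥ e l = if k = l then 1 else 0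

section Multi
variable {n : ℕ} {m : Fin n → Type*} [∀ i, Fintype (m i)] [∀ i, DecidableEq (m i)]

/-- The operator `I ⊗ ⋯ ⊗ A ⊗ ⋯ ⊗ I` acting as `A` on subsystem `i`. -/
def embedAt (i : Fin n) (A : Matrix (m i) (m i) ℂ) :
    Matrix (∀ j, m j) (∀ j, m j) ℂ :=
  Matrix.of fun x y =>
    A (x i) (y i) * ∏ j ∈ Finset.univ.erase i, (if x j = y j then (1 : ℂ) else 0)

/-- Tensor product of local operators. -/
def prodMat (M : ∀ i, Matrix (m i) (m i) ℂ) : Matrix (∀ i, m i) (∀ i, m i) ℂ :=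
  Matrix.of fun x y => ∏ i, M i (x i) (y i)

/-- Marginal (reduced density operator) on subsystem `i`. -/
noncomputable def marginal (ρ : Matrix (∀ j, m j) (∀ j, m j) ℂ) (i : Fin n) :
    Matrix (m i) (m i) ℂ :=
  Matrix.of fun a b => ∑ f : ∀ j, m j, if f i = a then ρ f (Function.update f i b) else 0

/-- Non-selective rank-one projective measurement on subsystem `i` in the basis `e`. -/
noncomputable def pinchAt (i : Fin n) (e : m i → m i → ℂ)
    (ρ : Matrix (∀ j, m j) (∀ j, m j) ℂ) : Matrix (∀ j, m j) (∀ j, m j) ℂ :=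
  ∑ k : m i, embedAt i (proj (e k)) * ρ * embedAt i (proj (e k))

/-- Non-selective local measurements on subsystems `A₁,…,A_k` (in the bases `e`). -/
noncomputable def pinchUpTo (e : ∀ i, m i → m i → ℂ) :
    ℕ → Matrix (∀ j, m j) (∀ j, m j) ℂ → Matrix (∀ j, m j) (∀ j, m j) ℂ
  | 0 => id
  | (k + 1) => fun ρ =>
      if h : k < n then pinchAt ⟨k, h⟩ (e ⟨k, h⟩) (pinchUpTo e k ρ)
      else pinchUpTo e k ρ

/-- Multipartite mutual information `I(σ) = Σ_k S(σ_{A_k}) − S(σ)`. -/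
noncomputable def Imut (σ : Matrix (∀ j, m j) (∀ j, m j) ℂ) : ℝ :=
  (∑ i, Sent (marginal σ i)) - Sent σ

/-- Shannon entropy (base 2) of the outcome distribution of the measurement of
subsystem `i` in basis `e`, in state `σ`. -/
noncomputable def Hmeas (i : Fin n) (e : m i → m i → ℂ)
    (σ : Matrix (∀ j, m j) (∀ j, m j) ℂ) : ℝ :=
  ∑ k : m i, Real.negMulLog ((embedAt i (proj (e k)) * σ).trace.re) / Real.log 2

/-- Fixed-measurement asymmetric thermal discord
`D_Φ(σ|A_i) = I(σ) − I(Φ_{A_i}(σ)) + H({p_{a_i}}) − S(σ_{A_i})`. -/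
noncomputable def DPhiAt (i : Fin n) (e : m i → m i → ℂ)
    (σ : Matrix (∀ j, m j) (∀ j, m j) ℂ) : ℝ :=
  Imut σ - Imut (pinchAt i e σ) + Hmeas i e σ - Sent (marginal σ i)

/-- Asymmetric thermal discord `D_th(σ|A_i)`, minimized over measurements on `A_i`. -/
noncomputable def DthAt (i : Fin n) (σ : Matrix (∀ j, m j) (∀ j, m j) ℂ) : ℝ :=
  sInf {x : ℝ | ∃ e : m i → m i → ℂ, ONB e ∧ x = DPhiAt i e σ}

/-- Thermal global quantum discord. -/
noncomputable def GQD (ρ : Matrix (∀ j, m j) (∀ j, m j) ℂ) : ℝ :=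
  sInf {x : ℝ | ∃ e : ∀ i, m i → m i → ℂ,
    (∀ i, ONB (e i)) ∧ x = Sent (pinchUpTo e n ρ) - Sent ρ}

end Multi

section Gen
open Polynomial
open scoped ComplexOrder
variable {d : Type*} [Fintype d] [DecidableEq d]

lemma charpoly_conj_unit (U A : Matrix d d ℂ) (hU : U * Uᴴ = 1) :
    (U * A * Uᴴ).charpoly = A.charpoly := by
  have hU' : Uᴴ * U = 1 := mul_eq_one_comm.mp hU
  have hmU : ((C : ℂ →+* ℂ[X]).mapMatrix U) * ((C : ℂ →+* ℂ[X]).mapMatrix Uᴴ) = 1 := by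
    rw [← _root_.map_mul, hU, _root_.map_one]
  have hscal : ∀ M : Matrix d d ℂ[X], M * Matrix.scalar d (X : ℂ[X]) = Matrix.scalar d (X : ℂ[X]) * M := by
    intro M
    ext i j
    simp [Matrix.scalar_apply, Matrix.mul_diagonal, Matrix.diagonal_mul, mul_comm]
  have key : Matrix.charmatrix (U * A * Uᴴ) =
      ((C : ℂ →+* ℂ[X]).mapMatrix U) * Matrix.charmatrix A * ((C : ℂ →+* ℂ[X]).mapMatrix Uᴴ) := by
    rw [Matrix.charmatrix, Matrix.charmatrix, _root_.map_mul, _root_.map_mul, Matrix.mul_sub, Matrix.sub_mul]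
    congr 1
    rw [hscal, Matrix.mul_assoc, hmU, Matrix.mul_one]
  rw [Matrix.charpoly, Matrix.charpoly, key, Matrix.det_mul, Matrix.det_mul]
  rw [mul_comm, ← mul_assoc, ← Matrix.det_mul, mul_eq_one_comm.mp hmU]
  simp

lemma charpoly_diagonal_c (v : d → ℂ) :
    (Matrix.diagonal v).charpoly = ∏ i, (X - C (v i)) := by
  rw [Matrix.charpoly]
  have : Matrix.charmatrix (Matrix.diagonal v) = Matrix.diagonal (fun i => X - C (v i)) := by
    ext i j
    by_cases h : i = j
    · subst h; simp
    · simp [Matrix.charmatrix_apply_ne _ _ _ h, Matrix.diagonal_apply_ne _ h]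
  rw [this, Matrix.det_diagonal]

lemma charpoly_hermitian (A : Matrix d d ℂ) (hA : A.IsHermitian) :
    A.charpoly = ∏ i, (X - C ((hA.eigenvalues i : ℝ) : ℂ)) := by
  conv_lhs => rw [hA.spectral_theorem, Unitary.conjStarAlgAut_apply]
  rw [Matrix.star_eq_conjTranspose]
  rw [charpoly_conj_unit _ _ (by
    have := Unitary.mul_star_self_of_mem (hA.eigenvectorUnitary).2
    rwa [Matrix.star_eq_conjTranspose] at this)]
  rw [charpoly_diagonal_c]
  rfl

lemma sum_g_eigenvalues (A : Matrix d d ℂ) (hA : A.IsHermitian)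
    (U : Matrix d d ℂ) (hU : U * Uᴴ = 1) (q : d → ℝ)
    (hAU : A = U * Matrix.diagonal (fun k => ((q k : ℝ) : ℂ)) * Uᴴ) (g : ℝ → ℝ) :
    ∑ i, g (hA.eigenvalues i) = ∑ k, g (q k) := by
  have h1 : (∏ i, (X - C ((hA.eigenvalues i : ℝ) : ℂ))) = ∏ k, (X - C ((q k : ℝ) : ℂ)) := by
    rw [← charpoly_hermitian A hA]
    conv_lhs => rw [hAU]
    rw [charpoly_conj_unit _ _ hU, charpoly_diagonal_c]
  have h2 : (Finset.univ.val.map fun i => ((hA.eigenvalues i : ℝ) : ℂ)) =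
      Finset.univ.val.map fun k => ((q k : ℝ) : ℂ) := by
    have e1 : ∀ (c : d → ℂ), (∏ i, (X - C (c i))) =
        ((Finset.univ.val.map c).map fun a => X - C a).prod := by
      intro c
      rw [Multiset.map_map]
      rfl
    have := congrArg Polynomial.roots h1
    rwa [e1, e1, Polynomial.roots_multiset_prod_X_sub_C, Polynomial.roots_multiset_prod_X_sub_C]
      at this
  have h3 : Finset.univ.val.map hA.eigenvalues = Finset.univ.val.map q := by
    have := congrArg (Multiset.map Complex.re) h2
    simpa [Multiset.map_map, Function.comp] using this
  calc ∑ i, g (hA.eigenvalues i) = ((Finset.univ.val.map hA.eigenvalues).map g).sum := by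
        rw [Multiset.map_map]; rfl
    _ = ((Finset.univ.val.map q).map g).sum := by rw [h3]
    _ = ∑ k, g (q k) := by rw [Multiset.map_map]; rfl


variable {d : Type*} [Fintype d] [DecidableEq d]

lemma onb_std : ONB (fun k l : d => if l = k then (1:ℂ) else 0) := by
  intro k l
  simp [dotProduct, Pi.star_apply, apply_ite, eq_comm]

lemma sum_proj {e : d → d → ℂ} (he : ONB e) : ∑ k, proj (e k) = 1 := by
  classical
  set V : Matrix d d ℂ := Matrix.of fun k a => e k a with hV
  have hVV : V * Vᴴ = 1 := by
    ext k l
    have := he l k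
    simp only [dotProduct, Pi.star_apply] at this
    simp only [Matrix.mul_apply, Matrix.conjTranspose_apply, hV, Matrix.of_apply,
      Matrix.one_apply]
    calc ∑ a, e k a * star (e l a) = ∑ a, star (e l a) * e k a := by
          simp [mul_comm]
      _ = if l = k then 1 else 0 := this
      _ = if k = l then 1 else 0 := by simp [eq_comm]
  have hVV' : Vᴴ * V = 1 := mul_eq_one_comm.mp hVV
  ext a b
  have h1 : (Vᴴ * V) b a = (1 : Matrix d d ℂ) b a := by rw [hVV']
  simp only [Matrix.mul_apply, Matrix.conjTranspose_apply, hV, Matrix.of_apply,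
    Matrix.one_apply] at h1
  simp only [Matrix.sum_apply, proj, Matrix.vecMulVec_apply, Pi.star_apply, Matrix.one_apply]
  calc ∑ k, e k a * star (e k b) = ∑ k, star (e k b) * e k a := by simp [mul_comm]
    _ = if b = a then 1 else 0 := h1
    _ = if a = b then 1 else 0 := by simp [eq_comm]

lemma proj_hermitian (v : d → ℂ) : (proj v)ᴴ = proj v := by
  ext a b; simp [proj, Matrix.conjTranspose_apply, Matrix.vecMulVec_apply, mul_comm]

lemma proj_mul_proj_self {v : d → ℂ} (hv : star v ⬝ᵥ v = 1) : proj v * proj v = proj v := by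
  ext a b
  simp only [Matrix.mul_apply, proj, Matrix.vecMulVec_apply, Pi.star_apply]
  calc ∑ c, v a * star (v c) * (v c * star (v b))
      = (v a * star (v b)) * ∑ c, star (v c) * v c := by rw [Finset.mul_sum]; congr 1; ext c; ring
    _ = v a * star (v b) := by
        have : ∑ c, star (v c) * v c = 1 := hv
        rw [this, mul_one]

lemma trace_proj_mul (v : d → ℂ) (M : Matrix d d ℂ) :
    (proj v * M).trace = star v ⬝ᵥ M.mulVec v := by
  simp only [Matrix.trace, Matrix.diag, Matrix.mul_apply, proj, Matrix.vecMulVec_apply,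
    dotProduct, Matrix.mulVec, Pi.star_apply]
  rw [Finset.sum_comm]
  simp only [Finset.mul_sum]
  exact Finset.sum_congr rfl fun c _ => Finset.sum_congr rfl fun a _ => by ring

lemma proj_M_proj (v : d → ℂ) (M : Matrix d d ℂ) :
    proj v * M * proj v = (star v ⬝ᵥ M.mulVec v) • proj v := by
  ext a b
  simp only [Matrix.mul_apply, proj, Matrix.vecMulVec_apply, Pi.star_apply, Matrix.smul_apply,
    dotProduct, Matrix.mulVec, smul_eq_mul]
  simp only [Finset.sum_mul, Finset.mul_sum]
  rw [Finset.sum_comm]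
  exact Finset.sum_congr rfl fun c _ => Finset.sum_congr rfl fun c2 _ => by ring

/-- U-matrix of an ONB: columns are the basis vectors. -/
def onbU (e : d → d → ℂ) : Matrix d d ℂ := Matrix.of fun a k => e k a

lemma onbU_mul_conjTranspose {e : d → d → ℂ} (he : ONB e) : onbU e * (onbU e)ᴴ = 1 := by
  have h := sum_proj he
  ext a b
  have h1 : (∑ k, proj (e k)) a b = (1 : Matrix d d ℂ) a b := by rw [h]
  simp only [Matrix.sum_apply, proj, Matrix.vecMulVec_apply, Pi.star_apply] at h1
  simpa only [Matrix.mul_apply, Matrix.conjTranspose_apply, onbU, Matrix.of_apply] using h1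

lemma sum_smul_proj_eq (e : d → d → ℂ) (q : d → ℂ) :
    onbU e * Matrix.diagonal q * (onbU e)ᴴ = ∑ k, q k • proj (e k) := by
  ext a b
  rw [Matrix.mul_assoc]
  simp only [Matrix.mul_apply, Matrix.diagonal_mul, Matrix.conjTranspose_apply, onbU,
    Matrix.of_apply, Matrix.sum_apply, Matrix.smul_apply, proj, Matrix.vecMulVec_apply,
    Pi.star_apply, smul_eq_mul]
  refine Finset.sum_congr rfl fun k _ => ?_
  have : ∑ x, Matrix.diagonal q k x * star (e x b) = q k * star (e k b) := by
    simp [Matrix.diagonal_apply, ite_mul, Finset.sum_ite_eq]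
  rw [this]; ring

end Gen

section Gen2
open scoped ComplexOrder
variable {d : Type*} [Fintype d] [DecidableEq d]

lemma negMulLog_le_one {x : ℝ} (h1 : 0 ≤ x) : Real.negMulLog x ≤ 1 := by
  rcases eq_or_lt_of_le h1 with h | h
  · simp [← h]
  · have hlog : Real.log x⁻¹ ≤ x⁻¹ - 1 := Real.log_le_sub_one_of_pos (by positivity)
    have hx : Real.negMulLog x = x * Real.log x⁻¹ := by
      rw [Real.log_inv, Real.negMulLog]; ring
    rw [hx]
    calc x * Real.log x⁻¹ ≤ x * (x⁻¹ - 1) := mul_le_mul_of_nonneg_left hlog h1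
      _ = 1 - x := by field_simp
      _ ≤ 1 := by linarith

lemma sum_eigenvalues_eq_trace_re (A : Matrix d d ℂ) (hA : A.IsHermitian) :
    ∑ i, hA.eigenvalues i = A.trace.re := by
  have h : A.trace = ∑ i, ((hA.eigenvalues i : ℝ) : ℂ) := by
    conv_lhs => rw [hA.spectral_theorem, Unitary.conjStarAlgAut_apply]
    rw [Matrix.trace_mul_cycle]
    rw [show (star (hA.eigenvectorUnitary : Matrix d d ℂ)) * (hA.eigenvectorUnitary : Matrix d d ℂ) = 1
      from Unitary.star_mul_self_of_mem (hA.eigenvectorUnitary).2]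
    rw [Matrix.one_mul, Matrix.trace_diagonal]
    rfl
  have := congrArg Complex.re h
  simp only [Complex.re_sum, Complex.ofReal_re] at this
  exact this.symm

end Gen2

section Gen3
open scoped ComplexOrder
variable {d : Type*} [Fintype d] [DecidableEq d]

lemma eigenvalues_le_one {A : Matrix d d ℂ} (hA : A.PosSemidef) (htr : A.trace = 1) (i : d) :
    hA.1.eigenvalues i ≤ 1 := by
  have hsum : ∑ j, hA.1.eigenvalues j = 1 := by
    rw [sum_eigenvalues_eq_trace_re A hA.1, htr]; simp
  calc hA.1.eigenvalues i ≤ ∑ j, hA.1.eigenvalues j :=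
        Finset.single_le_sum (fun j _ => hA.eigenvalues_nonneg j) (Finset.mem_univ i)
    _ = 1 := hsum

lemma Sent_nonneg {A : Matrix d d ℂ} (hA : A.PosSemidef) (htr : A.trace = 1) : 0 ≤ Sent A := by
  rw [Sent, dif_pos hA.1]
  refine Finset.sum_nonneg fun i _ => div_nonneg ?_ (Real.log_nonneg one_le_two)
  exact Real.negMulLog_nonneg (hA.eigenvalues_nonneg i) (eigenvalues_le_one hA htr i)

lemma Sent_le_card {A : Matrix d d ℂ} (hA : A.PosSemidef) (htr : A.trace = 1) :
    Sent A ≤ (Fintype.card d : ℝ) / Real.log 2 := by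
  rw [Sent, dif_pos hA.1]
  have h2 : (0:ℝ) < Real.log 2 := Real.log_pos one_lt_two
  calc ∑ i, Real.negMulLog (hA.1.eigenvalues i) / Real.log 2
      ≤ ∑ _i : d, 1 / Real.log 2 := by
        refine Finset.sum_le_sum fun i _ => ?_
        gcongr
        exact negMulLog_le_one (hA.eigenvalues_nonneg i)
    _ = (Fintype.card d : ℝ) / Real.log 2 := by
        rw [Finset.sum_const, Finset.card_univ, nsmul_eq_mul, mul_one_div]

lemma Sent_conj_diag (U : Matrix d d ℂ) (hU : U * Uᴴ = 1) (q : d → ℝ) :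
    Sent (U * Matrix.diagonal (fun k => ((q k : ℝ) : ℂ)) * Uᴴ) =
      ∑ k, Real.negMulLog (q k) / Real.log 2 := by
  have hD : (Matrix.diagonal (fun k => ((q k : ℝ) : ℂ))).IsHermitian := by
    have : (star fun k => ((q k : ℝ) : ℂ)) = fun k => ((q k : ℝ) : ℂ) := by
      funext k
      simp only [Pi.star_apply, Complex.star_def, Complex.conj_ofReal]
    rw [Matrix.IsHermitian, Matrix.diagonal_conjTranspose, this]
  have hH : (U * Matrix.diagonal (fun k => ((q k : ℝ) : ℂ)) * Uᴴ).IsHermitian :=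
    Matrix.isHermitian_mul_mul_conjTranspose U hD
  rw [Sent, dif_pos hH]
  exact sum_g_eigenvalues _ hH U hU q rfl (fun t => Real.negMulLog t / Real.log 2)

end Gen3

section MultiLem
open scoped ComplexOrder
variable {n : ℕ} {m : Fin n → Type*} [∀ i, Fintype (m i)] [∀ i, DecidableEq (m i)]

def sm (i : Fin n) (c : m i) (u : ∀ j : {j // j ≠ i}, m j) : ∀ j, m j :=
  (Equiv.piSplitAt i m).symm (c, u)

@[simp] lemma sm_apply_same (i : Fin n) (c : m i) (u : ∀ j : {j // j ≠ i}, m j) :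
    sm (m := m) i c u i = c := by
  simp [sm, Equiv.piSplitAt_symm_apply]

lemma sm_apply_ne (i : Fin n) (c : m i) (u : ∀ j : {j // j ≠ i}, m j) {j : Fin n} (h : j ≠ i) :
    sm (m := m) i c u j = u ⟨j, h⟩ := by
  simp [sm, Equiv.piSplitAt_symm_apply, h]

@[simp] lemma update_sm (i : Fin n) (c c' : m i) (u : ∀ j : {j // j ≠ i}, m j) :
    Function.update (sm (m := m) i c u) i c' = sm i c' u := by
  funext j
  rcases eq_or_ne j i with rfl | h
  · simp
  · simp [Function.update_of_ne h, sm_apply_ne _ _ _ h]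

lemma sm_restr (i : Fin n) (c : m i) (f : ∀ j, m j) :
    sm i c (fun j => f j) = Function.update f i c := by
  funext j
  rcases eq_or_ne j i with rfl | h
  · simp
  · simp [Function.update_of_ne h, sm_apply_ne _ _ _ h]

lemma sum_sm (i : Fin n) (g : (∀ j, m j) → ℂ) :
    ∑ f, g f = ∑ c : m i, ∑ u, g (sm i c u) := by
  rw [← Equiv.sum_comp (Equiv.piSplitAt i m).symm g, Fintype.sum_prod_type]
  rfl

lemma prod_delta (i : Fin n) (x z : ∀ j, m j) :
    (∏ j ∈ Finset.univ.erase i, if x j = z j then (1:ℂ) else 0)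
      = if (∀ j, j ≠ i → x j = z j) then 1 else 0 := by
  by_cases h : ∀ j, j ≠ i → x j = z j
  · rw [if_pos h]
    apply Finset.prod_eq_one
    intro j hj
    rw [if_pos (h j (Finset.mem_erase.mp hj).1)]
  · rw [if_neg h]
    push_neg at h
    obtain ⟨j, hj, hne⟩ := h
    exact Finset.prod_eq_zero (Finset.mem_erase.mpr ⟨hj, Finset.mem_univ j⟩) (if_neg hne)

lemma forall_ne_sm_iff {i : Fin n} (f : ∀ j, m j) (c : m i) (u : ∀ j : {j // j ≠ i}, m j) :
    (∀ j, j ≠ i → f j = sm i c u j) ↔ (fun j : {j // j ≠ i} => f j) = u := by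
  constructor
  · intro h; funext j; rw [h j j.2, sm_apply_ne _ _ _ j.2]
  · intro h j hj
    rw [sm_apply_ne _ _ _ hj, ← h]

lemma forall_ne_sm_iff' {i : Fin n} (f : ∀ j, m j) (c : m i) (u : ∀ j : {j // j ≠ i}, m j) :
    (∀ j, j ≠ i → sm i c u j = f j) ↔ (fun j : {j // j ≠ i} => f j) = u := by
  rw [← forall_ne_sm_iff f c u]
  constructor <;> intro h j hj <;> exact (h j hj).symm

lemma mul_embed_left (i : Fin n) (A : Matrix (m i) (m i) ℂ)
    (σ : Matrix (∀ j, m j) (∀ j, m j) ℂ) (f g : ∀ j, m j) :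
    (embedAt i A * σ) f g = ∑ c, A (f i) c * σ (Function.update f i c) g := by
  rw [Matrix.mul_apply]
  rw [sum_sm i]
  simp only [embedAt, Matrix.of_apply, sm_apply_same, prod_delta, forall_ne_sm_iff]
  have : ∀ c : m i, ∑ u, A (f i) c * (if (fun j : {j // j ≠ i} => f j) = u then (1:ℂ) else 0)
      * σ (sm i c u) g = A (f i) c * σ (Function.update f i c) g := by
    intro c
    rw [Finset.sum_eq_single (fun j : {j // j ≠ i} => f j)]
    · rw [if_pos rfl, mul_one, sm_restr]
    · intro u _ hu
      rw [if_neg (Ne.symm hu), mul_zero, zero_mul]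
    · intro h; exact absurd (Finset.mem_univ _) h
  exact Finset.sum_congr rfl fun c _ => this c

lemma mul_embed_right (i : Fin n) (A : Matrix (m i) (m i) ℂ)
    (σ : Matrix (∀ j, m j) (∀ j, m j) ℂ) (f g : ∀ j, m j) :
    (σ * embedAt i A) f g = ∑ c, σ f (Function.update g i c) * A c (g i) := by
  rw [Matrix.mul_apply]
  rw [sum_sm i]
  simp only [embedAt, Matrix.of_apply, sm_apply_same, prod_delta, forall_ne_sm_iff']
  have : ∀ c : m i, ∑ u, σ f (sm i c u) * (A c (g i)
      * (if (fun j : {j // j ≠ i} => g j) = u then (1:ℂ) else 0))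
      = σ f (Function.update g i c) * A c (g i) := by
    intro c
    rw [Finset.sum_eq_single (fun j : {j // j ≠ i} => g j)]
    · rw [if_pos rfl, mul_one, sm_restr]
    · intro u _ hu
      rw [if_neg (Ne.symm hu), mul_zero, mul_zero]
    · intro h; exact absurd (Finset.mem_univ _) h
  exact Finset.sum_congr rfl fun c _ => this c

end MultiLem

section MultiLem2
open scoped ComplexOrder
variable {n : ℕ} {m : Fin n → Type*} [∀ i, Fintype (m i)] [∀ i, DecidableEq (m i)]

lemma marginal_apply_sm (σ : Matrix (∀ j, m j) (∀ j, m j) ℂ) (i : Fin n) (a b : m i) :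
    marginal σ i a b = ∑ u, σ (sm i a u) (sm i b u) := by
  simp only [marginal, Matrix.of_apply]
  rw [sum_sm i]
  simp only [sm_apply_same, update_sm]
  rw [Finset.sum_comm]
  simp [Finset.sum_ite_eq']

lemma marginal_eq_sum_submatrix (σ : Matrix (∀ j, m j) (∀ j, m j) ℂ) (i : Fin n) :
    marginal σ i = ∑ u, σ.submatrix (fun c => sm i c u) (fun c => sm i c u) := by
  ext a b
  rw [marginal_apply_sm]
  simp [Matrix.sum_apply]

lemma trace_marginal (σ : Matrix (∀ j, m j) (∀ j, m j) ℂ) (i : Fin n) :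
    (marginal σ i).trace = σ.trace := by
  have : (marginal σ i).trace = ∑ c : m i, ∑ u, σ (sm i c u) (sm i c u) := by
    simp [Matrix.trace, Matrix.diag, marginal_apply_sm]
  rw [this, ← sum_sm i (fun f => σ f f)]
  rfl

lemma posSemidef_sum {d : Type*} [Fintype d] [DecidableEq d] {ι : Type*} (s : Finset ι)
    (f : ι → Matrix d d ℂ) (h : ∀ k ∈ s, (f k).PosSemidef) : (∑ k ∈ s, f k).PosSemidef := by
  classical
  induction s using Finset.induction_on with
  | empty => simpa using Matrix.PosSemidef.zero
  | insert a t hns ih =>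
    rw [Finset.sum_insert hns]
    exact (h a (Finset.mem_insert_self a t)).add
      (ih fun k hk => h k (Finset.mem_insert_of_mem hk))

lemma posSemidef_marginal {σ : Matrix (∀ j, m j) (∀ j, m j) ℂ} (hσ : σ.PosSemidef) (i : Fin n) :
    (marginal σ i).PosSemidef := by
  rw [marginal_eq_sum_submatrix]
  exact posSemidef_sum _ _ fun u _ => hσ.submatrix _

lemma marginal_sum {ι : Type*} (s : Finset ι) (f : ι → Matrix (∀ j, m j) (∀ j, m j) ℂ)
    (i : Fin n) : marginal (∑ k ∈ s, f k) i = ∑ k ∈ s, marginal (f k) i := by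
  ext a b
  simp only [marginal_apply_sm, Matrix.sum_apply]
  exact Finset.sum_comm

lemma embedAt_mul (i : Fin n) (A B : Matrix (m i) (m i) ℂ) :
    embedAt i A * embedAt i B = embedAt i (A * B) := by
  ext x y
  rw [mul_embed_left]
  simp only [embedAt, Matrix.of_apply, Matrix.mul_apply, Finset.sum_mul]
  rw [Finset.sum_congr rfl (fun c _ => ?_)]
  simp only [Function.update_self]
  have : ∀ j ∈ Finset.univ.erase i, (if (Function.update x i c) j = y j then (1:ℂ) else 0)
      = (if x j = y j then (1:ℂ) else 0) := by
    intro j hj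
    rw [Function.update_of_ne (Finset.mem_erase.mp hj).1]
  rw [Finset.prod_congr rfl this]
  ring

lemma embedAt_sum {ι : Type*} (i : Fin n) (s : Finset ι) (f : ι → Matrix (m i) (m i) ℂ) :
    ∑ k ∈ s, embedAt i (f k) = embedAt i (∑ k ∈ s, f k) := by
  ext x y
  simp [embedAt, Matrix.sum_apply, Finset.sum_mul]

lemma embedAt_one (i : Fin n) : embedAt i (1 : Matrix (m i) (m i) ℂ) = 1 := by
  ext x y
  simp only [embedAt, Matrix.of_apply, prod_delta, Matrix.one_apply]
  by_cases h : x = y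
  · subst h; simp
  · have : ¬(x i = y i ∧ ∀ j, j ≠ i → x j = y j) := by
      intro ⟨h1, h2⟩
      exact h (funext fun j => by rcases eq_or_ne j i with rfl | hj; exacts [h1, h2 j hj])
    rw [if_neg h]
    rcases not_and_or.mp this with h1 | h2
    · rw [if_neg h1, zero_mul]
    · rw [if_neg h2, mul_zero]

lemma embedAt_conjTranspose (i : Fin n) (A : Matrix (m i) (m i) ℂ) :
    (embedAt i A)ᴴ = embedAt i Aᴴ := by
  ext x y
  rw [Matrix.conjTranspose_apply]
  simp only [embedAt, Matrix.of_apply, prod_delta]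
  rw [star_mul']
  refine congrArg₂ (· * ·) rfl ?_
  rw [apply_ite (star : ℂ → ℂ), star_one, star_zero]
  exact if_congr ⟨fun h j hj => (h j hj).symm, fun h j hj => (h j hj).symm⟩ rfl rfl

lemma trace_embed_mul (i : Fin n) (A : Matrix (m i) (m i) ℂ)
    (σ : Matrix (∀ j, m j) (∀ j, m j) ℂ) :
    (embedAt i A * σ).trace = (A * marginal σ i).trace := by
  have h1 : (embedAt i A * σ).trace = ∑ c : m i, ∑ u, ∑ c2,
      A c c2 * σ (sm i c2 u) (sm i c u) := by
    simp only [Matrix.trace, Matrix.diag]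
    rw [show ∑ f, (embedAt i A * σ) f f
        = ∑ f, ∑ c2, A (f i) c2 * σ (Function.update f i c2) f from
      Finset.sum_congr rfl fun f _ => mul_embed_left i A σ f f]
    rw [sum_sm i (fun f => ∑ c2, A (f i) c2 * σ (Function.update f i c2) f)]
    simp [update_sm]
  rw [h1]
  simp only [Matrix.trace, Matrix.diag, Matrix.mul_apply, marginal_apply_sm, Finset.mul_sum]
  refine Finset.sum_congr rfl fun c _ => ?_
  exact Finset.sum_comm

end MultiLem2

section MultiLem3
open scoped ComplexOrder
variable {n : ℕ} {m : Fin n → Type*} [∀ i, Fintype (m i)] [∀ i, DecidableEq (m i)]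

lemma sum_update_swap (i : Fin n) (g : (∀ j, m j) → m i → ℂ) :
    ∑ f, ∑ c, g f c = ∑ f, ∑ c, g (Function.update f i c) (f i) := by
  have hinv : Function.Involutive
      (fun p : (∀ j, m j) × m i => (Function.update p.1 i p.2, p.1 i)) := by
    intro p
    simp [Function.update_idem, Function.update_eq_self]
  have key := Fintype.sum_bijective _ hinv.bijective
    (fun p : (∀ j, m j) × m i => g (Function.update p.1 i p.2) (p.1 i))
    (fun p : (∀ j, m j) × m i => g p.1 p.2)
    (fun p => by simp [Function.update_idem, Function.update_eq_self])
  calc ∑ f, ∑ c, g f c = ∑ p : (∀ j, m j) × m i, g p.1 p.2 :=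
        (Fintype.sum_prod_type (f := fun p : (∀ j, m j) × m i => g p.1 p.2)).symm
    _ = ∑ p : (∀ j, m j) × m i, g (Function.update p.1 i p.2) (p.1 i) := key.symm
    _ = ∑ f, ∑ c, g (Function.update f i c) (f i) :=
        Fintype.sum_prod_type (f := fun p : (∀ j, m j) × m i => g (Function.update p.1 i p.2) (p.1 i))

lemma marginal_mul_embed_comm {i j : Fin n} (hij : j ≠ i) (A : Matrix (m i) (m i) ℂ)
    (σ : Matrix (∀ j, m j) (∀ j, m j) ℂ) :
    marginal (embedAt i A * σ) j = marginal (σ * embedAt i A) j := by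
  have hij' : i ≠ j := Ne.symm hij
  ext a b
  simp only [marginal, Matrix.of_apply]
  have L : ∑ f, (if f j = a then (embedAt i A * σ) f (Function.update f j b) else 0)
      = ∑ f, ∑ c, (if f j = a then
          A (f i) c * σ (Function.update f i c) (Function.update f j b) else 0) := by
    refine Finset.sum_congr rfl fun f _ => ?_
    rw [mul_embed_left]
    split_ifs with h
    · rfl
    · simp
  have R : ∑ f, (if f j = a then (σ * embedAt i A) f (Function.update f j b) else 0)
      = ∑ f, ∑ c, (if f j = a then
          σ f (Function.update (Function.update f j b) i c) * A c (f i) else 0) := by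
    refine Finset.sum_congr rfl fun f _ => ?_
    rw [mul_embed_right]
    have hupd : (Function.update f j b) i = f i := Function.update_of_ne hij' _ _
    rw [hupd]
    split_ifs with h
    · rfl
    · simp
  rw [L, R, sum_update_swap i]
  refine Finset.sum_congr rfl fun f _ => Finset.sum_congr rfl fun c _ => ?_
  rw [Function.update_of_ne hij, Function.update_self, Function.update_idem,
    Function.update_eq_self, Function.update_comm hij']
  split_ifs with h
  · ring
  · rfl

lemma marginal_embed_mul_embed (i : Fin n) (A B : Matrix (m i) (m i) ℂ)
    (σ : Matrix (∀ j, m j) (∀ j, m j) ℂ) :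
    marginal (embedAt i A * σ * embedAt i B) i = A * marginal σ i * B := by
  ext a b
  rw [marginal_apply_sm]
  have h1 : ∀ u, (embedAt i A * σ * embedAt i B) (sm i a u) (sm i b u)
      = ∑ c, ∑ c', A a c * (σ (sm i c u) (sm i c' u) * B c' b) := by
    intro u
    rw [Matrix.mul_assoc, mul_embed_left]
    simp only [sm_apply_same, update_sm]
    refine Finset.sum_congr rfl fun c _ => ?_
    rw [mul_embed_right]
    simp only [sm_apply_same, update_sm, Finset.mul_sum]
  rw [Finset.sum_congr rfl fun u _ => h1 u]
  calc ∑ u, ∑ c, ∑ c', A a c * (σ (sm i c u) (sm i c' u) * B c' b)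
      = ∑ c, ∑ u, ∑ c', A a c * (σ (sm i c u) (sm i c' u) * B c' b) := Finset.sum_comm
    _ = ∑ c, ∑ c', ∑ u, A a c * (σ (sm i c u) (sm i c' u) * B c' b) :=
        Finset.sum_congr rfl fun c _ => Finset.sum_comm
    _ = ∑ c', ∑ c, ∑ u, A a c * (σ (sm i c u) (sm i c' u) * B c' b) := Finset.sum_comm
    _ = (A * marginal σ i * B) a b := by
        simp only [Matrix.mul_apply, marginal_apply_sm, Finset.sum_mul, Finset.mul_sum]
        refine Finset.sum_congr rfl fun c' _ => Finset.sum_congr rfl fun c _ =>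
          Finset.sum_congr rfl fun u _ => by ring

lemma pinchAt_posSemidef (i : Fin n) (e : m i → m i → ℂ)
    {σ : Matrix (∀ j, m j) (∀ j, m j) ℂ} (hσ : σ.PosSemidef) :
    (pinchAt i e σ).PosSemidef := by
  refine posSemidef_sum _ _ fun k _ => ?_
  have h := hσ.conjTranspose_mul_mul_same (B := embedAt i (proj (e k)))
  rwa [embedAt_conjTranspose, proj_hermitian] at h

lemma embed_proj_idem (i : Fin n) {e : m i → m i → ℂ} (he : ONB e) (k : m i) :
    embedAt i (proj (e k)) * embedAt i (proj (e k)) = embedAt i (proj (e k)) := by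
  rw [embedAt_mul, proj_mul_proj_self]
  have := he k k
  rwa [if_pos rfl] at this

lemma sum_embed_proj {i : Fin n} {e : m i → m i → ℂ} (he : ONB e) :
    ∑ k, embedAt i (proj (e k)) = 1 := by
  rw [embedAt_sum, sum_proj he, embedAt_one]

lemma trace_pinchAt (i : Fin n) {e : m i → m i → ℂ} (he : ONB e)
    (σ : Matrix (∀ j, m j) (∀ j, m j) ℂ) : (pinchAt i e σ).trace = σ.trace := by
  rw [pinchAt, Matrix.trace_sum]
  have h1 : ∀ k, (embedAt i (proj (e k)) * σ * embedAt i (proj (e k))).trace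
      = (embedAt i (proj (e k)) * σ).trace := by
    intro k
    rw [Matrix.trace_mul_cycle, embed_proj_idem i he]
  rw [Finset.sum_congr rfl fun k _ => h1 k]
  have h2 : ∀ k, (embedAt i (proj (e k)) * σ).trace
      = ((embedAt i (proj (e k))) * σ).trace := fun k => rfl
  rw [show ∑ k, (embedAt i (proj (e k)) * σ).trace = ((∑ k, embedAt i (proj (e k))) * σ).trace
    from by rw [Finset.sum_mul, Matrix.trace_sum]]
  rw [sum_embed_proj he, Matrix.one_mul]

lemma marginal_pinchAt_ne {i j : Fin n} (hij : j ≠ i) {e : m i → m i → ℂ} (he : ONB e)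
    (σ : Matrix (∀ j, m j) (∀ j, m j) ℂ) :
    marginal (pinchAt i e σ) j = marginal σ j := by
  rw [pinchAt, marginal_sum]
  have h1 : ∀ k, marginal (embedAt i (proj (e k)) * σ * embedAt i (proj (e k))) j
      = marginal (σ * embedAt i (proj (e k))) j := by
    intro k
    rw [Matrix.mul_assoc, marginal_mul_embed_comm hij, Matrix.mul_assoc, embed_proj_idem i he]
  rw [Finset.sum_congr rfl fun k _ => h1 k]
  rw [← marginal_sum]
  rw [show ∑ k, σ * embedAt i (proj (e k)) = σ * ∑ k, embedAt i (proj (e k))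
    from by rw [Finset.mul_sum]]
  rw [sum_embed_proj he, Matrix.mul_one]

lemma marginal_pinchAt_same (i : Fin n) (e : m i → m i → ℂ)
    (σ : Matrix (∀ j, m j) (∀ j, m j) ℂ) :
    marginal (pinchAt i e σ) i
      = ∑ k, (star (e k) ⬝ᵥ (marginal σ i).mulVec (e k)) • proj (e k) := by
  rw [pinchAt, marginal_sum]
  refine Finset.sum_congr rfl fun k _ => ?_
  rw [marginal_embed_mul_embed, proj_M_proj]

end MultiLem3

section MultiLem4
open scoped ComplexOrder
variable {n : ℕ} {m : Fin n → Type*} [∀ i, Fintype (m i)] [∀ i, DecidableEq (m i)]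

lemma Sent_marg_pinch {i : Fin n} {e : m i → m i → ℂ} (he : ONB e)
    {σ : Matrix (∀ j, m j) (∀ j, m j) ℂ} (hσ : σ.PosSemidef) :
    Sent (marginal (pinchAt i e σ) i) = Hmeas i e σ := by
  set M := marginal σ i with hM
  set q : m i → ℂ := fun k => star (e k) ⬝ᵥ M.mulVec (e k) with hq
  have hreal : ∀ k, q k = (((q k).re : ℝ) : ℂ) := by
    intro k
    have h0 : 0 ≤ q k := (posSemidef_marginal hσ i).dotProduct_mulVec_nonneg (e k)
    have := (Complex.nonneg_iff.mp h0).2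
    apply Complex.ext
    · simp
    · simp [← this]
  have h1 : marginal (pinchAt i e σ) i
      = onbU e * Matrix.diagonal (fun k => (((q k).re : ℝ) : ℂ)) * (onbU e)ᴴ := by
    rw [marginal_pinchAt_same, sum_smul_proj_eq]
    exact Finset.sum_congr rfl fun k _ => congrArg (· • proj (e k)) (hreal k)
  rw [h1, Sent_conj_diag (onbU e) (onbU_mul_conjTranspose he) (fun k => (q k).re)]
  unfold Hmeas
  refine (Finset.sum_congr rfl fun k _ => ?_).symm
  rw [trace_embed_mul, trace_proj_mul]

lemma DPhiAt_eq {i : Fin n} {e : m i → m i → ℂ} (he : ONB e)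
    {σ : Matrix (∀ j, m j) (∀ j, m j) ℂ} (hσ : σ.PosSemidef) :
    DPhiAt i e σ = Sent (pinchAt i e σ) - Sent σ := by
  unfold DPhiAt Imut
  have hsum : ∑ j, (Sent (marginal (pinchAt i e σ) j) - Sent (marginal σ j))
      = Sent (marginal (pinchAt i e σ) i) - Sent (marginal σ i) := by
    refine Finset.sum_eq_single i (fun j _ hji => ?_) (by simp)
    rw [marginal_pinchAt_ne hji he]
    ring
  rw [Finset.sum_sub_distrib] at hsum
  have hmeas := Sent_marg_pinch he hσ
  linarith [hsum, hmeas]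

lemma pinchUpTo_state {e : ∀ i, m i → m i → ℂ} (he : ∀ i, ONB (e i))
    {ρ : Matrix (∀ j, m j) (∀ j, m j) ℂ} (hρ : ρ.PosSemidef) (htr : ρ.trace = 1) :
    ∀ k : ℕ, (pinchUpTo e k ρ).PosSemidef ∧ (pinchUpTo e k ρ).trace = 1 := by
  intro k
  induction k with
  | zero => exact ⟨hρ, htr⟩
  | succ k ih =>
    by_cases h : k < n
    · have : pinchUpTo e (k + 1) ρ = pinchAt ⟨k, h⟩ (e ⟨k, h⟩) (pinchUpTo e k ρ) := by
        simp [pinchUpTo, h]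
      rw [this]
      exact ⟨pinchAt_posSemidef _ _ ih.1, by rw [trace_pinchAt _ (he _), ih.2]⟩
    · have : pinchUpTo e (k + 1) ρ = pinchUpTo e k ρ := by
        simp [pinchUpTo, h]
      rw [this]
      exact ih

end MultiLem4


open scoped ComplexOrder in
/-- Theorem: the thermal global quantum discord bounds the chained sum of
asymmetric thermal discords:
`D_th(A₁:⋯:Aₙ) ≥ Σᵢ min_{Φ_{A₁⋯A_{i−1}}} D_th(Φ_{A₁⋯A_{i−1}}(ρ)|A_i)`. -/
theorem GQD_ge_sum_min_Dth {n : ℕ} {m : Fin n → Type*}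
    [∀ i, Fintype (m i)] [∀ i, DecidableEq (m i)]
    (ρ : Matrix (∀ j, m j) (∀ j, m j) ℂ) (hρ : ρ.PosSemidef) (htr : ρ.trace = 1) :
    (∑ i : Fin n, sInf {x : ℝ | ∃ e : ∀ i, m i → m i → ℂ,
        (∀ i, ONB (e i)) ∧ x = DthAt i (pinchUpTo e i.val ρ)}) ≤ GQD ρ := by
  classical
  set K : ℝ := (Fintype.card (∀ j, m j) : ℝ) / Real.log 2 with hK
  set std : ∀ i : Fin n, m i → m i → ℂ := fun i => fun k l => if l = k then (1:ℂ) else 0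
    with hstd
  have hstdONB : ∀ i, ONB (std i) := fun i => onb_std
  have hDPhi_low : ∀ (i : Fin n) (e' : m i → m i → ℂ), ONB e' →
      ∀ σ : Matrix (∀ j, m j) (∀ j, m j) ℂ, σ.PosSemidef → σ.trace = 1 →
      -K ≤ DPhiAt i e' σ := by
    intro i e' he' σ hσ hσtr
    rw [DPhiAt_eq he' hσ]
    have h1 : 0 ≤ Sent (pinchAt i e' σ) :=
      Sent_nonneg (pinchAt_posSemidef _ _ hσ) (by rw [trace_pinchAt _ he', hσtr])
    have h2 : Sent σ ≤ K := Sent_le_card hσ hσtr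
    linarith
  have hDth_low : ∀ (i : Fin n) (σ : Matrix (∀ j, m j) (∀ j, m j) ℂ),
      σ.PosSemidef → σ.trace = 1 → -K ≤ DthAt i σ := by
    intro i σ hσ hσtr
    refine le_csInf ⟨DPhiAt i (std i) σ, std i, hstdONB i, rfl⟩ ?_
    rintro x ⟨e', he', rfl⟩
    exact hDPhi_low i e' he' σ hσ hσtr
  have hDth_le : ∀ (i : Fin n) (σ : Matrix (∀ j, m j) (∀ j, m j) ℂ),
      σ.PosSemidef → σ.trace = 1 → ∀ (e' : m i → m i → ℂ), ONB e' →
      DthAt i σ ≤ DPhiAt i e' σ := by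
    intro i σ hσ hσtr e' he'
    refine csInf_le ⟨-K, ?_⟩ ⟨e', he', rfl⟩
    rintro x ⟨e'', he'', rfl⟩
    exact hDPhi_low i e'' he'' σ hσ hσtr
  refine le_csInf ⟨Sent (pinchUpTo std n ρ) - Sent ρ, std, hstdONB, rfl⟩ ?_
  rintro b ⟨e, he, rfl⟩
  have htele : Sent (pinchUpTo e n ρ) - Sent ρ
      = ∑ i : Fin n, (Sent (pinchUpTo e (i.val + 1) ρ) - Sent (pinchUpTo e i.val ρ)) := by
    rw [Fin.sum_univ_eq_sum_range
      (fun k => Sent (pinchUpTo e (k+1) ρ) - Sent (pinchUpTo e k ρ)) n]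
    rw [Finset.sum_range_sub (fun k => Sent (pinchUpTo e k ρ))]
    rfl
  rw [htele]
  refine Finset.sum_le_sum fun i _ => ?_
  have hstate := pinchUpTo_state he hρ htr i.val
  have hstep : pinchUpTo e (i.val + 1) ρ = pinchAt i (e i) (pinchUpTo e i.val ρ) := by
    simp [pinchUpTo, i.isLt]
  rw [hstep, ← DPhiAt_eq (he i) hstate.1]
  have h1 : sInf {x : ℝ | ∃ e'' : ∀ i, m i → m i → ℂ,
      (∀ i, ONB (e'' i)) ∧ x = DthAt i (pinchUpTo e'' i.val ρ)}
      ≤ DthAt i (pinchUpTo e i.val ρ) := by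
    refine csInf_le ⟨-K, ?_⟩ ⟨e, he, rfl⟩
    rintro x ⟨e'', he'', rfl⟩
    have hst := pinchUpTo_state he'' hρ htr i.val
    exact hDth_low i _ hst.1 hst.2
  have h2 := hDth_le i _ hstate.1 hstate.2 (e i) (he i)
  linarith
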